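/- For α > 0, define I(p,t) = (4/3)[t·p^{3/2} + 2(α - pt + (1-t)^{-1})^{3/2}/√(1-t)] for t ∈ (0,1) and p ≥ 0 with pt ≤ α + (1-t)^{-1}. Then the minimum of I(p,t) over p is attained at p*(t) = 4(α + (1-t)^{-1})/(1+3t), and the minimum over t ∈ (0,1) of I(p*(t), t) is attained at t* = (√(1+1/α) - √(1/α))², with minimal value (4/3) + 2α + (4/3)(1+α)^{3/2}. -/

import Mathlib

private lemma rpow_32_eq_sqrt_cube (x : ℝ) (hx : 0 ≤ x) :
    x ^ ((3:ℝ)/2) = Real.sqrt x ^ 3 := by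
  rw [show ((3:ℝ)/2) = (1/2) * (3:ℕ) by norm_num, Real.rpow_mul hx, Real.rpow_natCast,
    ← Real.sqrt_eq_rpow]

/-- Tangent line inequality for `x^{3/2}` written via square roots. -/
private lemma tangent_sqrt (x y : ℝ) (hx : 0 ≤ x) (hy : 0 ≤ y) :
    Real.sqrt y ^ 3 + (3/2) * Real.sqrt y * (x - y) ≤ Real.sqrt x ^ 3 := by
  have hu := Real.sqrt_nonneg x
  have hv := Real.sqrt_nonneg y
  have hu2 := Real.sq_sqrt hx
  have hv2 := Real.sq_sqrt hy
  nlinarith [mul_nonneg (sq_nonneg (Real.sqrt x - Real.sqrt y))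
    (by positivity : (0:ℝ) ≤ Real.sqrt x + Real.sqrt y / 2)]

/-- Key polynomial inequality for the minimization over `t`. -/
private lemma keypoly (b u : ℝ) (hb : 1 ≤ b) (hu : 0 ≤ u) :
    (b+1)^4 * (2*b-1)^2 * u^3 * (4-3*u) ≤ 16 * ((b^2-1)*u+1)^3 := by
  have h1 : (0:ℝ) ≤ -8 + 4*b + 12*b^2 := by nlinarith
  have h2 : (0:ℝ) ≤ 3 - 6*b - 9*b^2 + 12*b^3 + 12*b^4 := by nlinarith [sq_nonneg (b-1), sq_nonneg b]
  have hS : (0:ℝ) ≤ 4 + u*(-8 + 4*b + 12*b^2) + u^2*(3 - 6*b - 9*b^2 + 12*b^3 + 12*b^4) := by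
    have := mul_nonneg hu h1
    have := mul_nonneg (sq_nonneg u) h2
    linarith
  nlinarith [mul_nonneg (sq_nonneg ((b+1)*u - 2)) hS]

/-- The value of `I` at `p = p*(t)`. -/
private lemma value_at_pstar (α t : ℝ) (hα : 0 < α) (ht0 : 0 < t) (ht1 : t < 1) :
    (4/3) * (t * (4 * (α + (1 - t)⁻¹) / (1 + 3 * t)) ^ ((3:ℝ)/2) +
      2 * (α - (4 * (α + (1 - t)⁻¹) / (1 + 3 * t)) * t + (1 - t)⁻¹) ^ ((3:ℝ)/2)
        / Real.sqrt (1 - t))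
    = (8/3) * Real.sqrt (α + (1 - t)⁻¹) ^ 3 / Real.sqrt (1 + 3*t) := by
  have h1t : (0:ℝ) < 1 - t := by linarith
  have h3t : (0:ℝ) < 1 + 3*t := by linarith
  have hA : (0:ℝ) < α + (1 - t)⁻¹ := by positivity
  set A := α + (1 - t)⁻¹ with hAdef
  have hps : Real.sqrt (4 * A / (1 + 3 * t)) = 2 * Real.sqrt A / Real.sqrt (1 + 3*t) := by
    rw [Real.sqrt_div (by positivity), show (4:ℝ) * A = 2^2 * A by ring,
      Real.sqrt_mul (by positivity), Real.sqrt_sq (by norm_num)]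
  have hrem : α - (4 * A / (1 + 3 * t)) * t + (1 - t)⁻¹ = A * (1 - t) / (1 + 3*t) := by
    rw [hAdef]; field_simp; ring
  have hrs : Real.sqrt (A * (1 - t) / (1 + 3*t))
      = Real.sqrt A * Real.sqrt (1 - t) / Real.sqrt (1 + 3*t) := by
    rw [Real.sqrt_div (by positivity), Real.sqrt_mul hA.le]
  rw [rpow_32_eq_sqrt_cube _ (by positivity), hps, hrem,
    rpow_32_eq_sqrt_cube _ (by positivity), hrs]
  have ha := Real.sqrt_nonneg A
  have hc2 : Real.sqrt (1 + 3*t) ^ 2 = 1 + 3*t := Real.sq_sqrt h3t.le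
  have hd2 : Real.sqrt (1 - t) ^ 2 = 1 - t := Real.sq_sqrt h1t.le
  have hc0 : (0:ℝ) < Real.sqrt (1 + 3*t) := Real.sqrt_pos.mpr h3t
  have hd0 : (0:ℝ) < Real.sqrt (1 - t) := Real.sqrt_pos.mpr h1t
  set a := Real.sqrt A
  set c := Real.sqrt (1 + 3*t)
  set d := Real.sqrt (1 - t)
  field_simp
  linear_combination (8*a^3) * hd2 - (8*a^3) * hc2

/-- Minimization over `p` at fixed `t`. -/
private lemma min_over_p (α t : ℝ) (hα : 0 < α) (ht0 : 0 < t) (ht1 : t < 1)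
    (p : ℝ) (hp : 0 ≤ p) (hpc : p * t ≤ α + (1 - t)⁻¹) :
    (4/3) * (t * (4 * (α + (1 - t)⁻¹) / (1 + 3 * t)) ^ ((3:ℝ)/2) +
      2 * (α - (4 * (α + (1 - t)⁻¹) / (1 + 3 * t)) * t + (1 - t)⁻¹) ^ ((3:ℝ)/2)
        / Real.sqrt (1 - t))
    ≤ (4/3) * (t * p ^ ((3:ℝ)/2) +
      2 * (α - p * t + (1 - t)⁻¹) ^ ((3:ℝ)/2) / Real.sqrt (1 - t)) := by
  have h1t : (0:ℝ) < 1 - t := by linarith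
  have h3t : (0:ℝ) < 1 + 3*t := by linarith
  have hA : (0:ℝ) < α + (1 - t)⁻¹ := by positivity
  set A := α + (1 - t)⁻¹ with hAdef
  set q := 4 * A / (1 + 3 * t) with hq
  have hq0 : 0 ≤ q := by rw [hq]; positivity
  have hrem : α - q * t + (1 - t)⁻¹ = A * (1 - t) / (1 + 3*t) := by
    rw [hq, hAdef]; field_simp; ring
  have hrem0 : 0 ≤ α - q * t + (1 - t)⁻¹ := by rw [hrem]; positivity
  have hprem0 : 0 ≤ α - p * t + (1 - t)⁻¹ := by rw [hAdef] at hpc; linarith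
  rw [rpow_32_eq_sqrt_cube _ hq0, rpow_32_eq_sqrt_cube _ hrem0,
    rpow_32_eq_sqrt_cube _ hp, rpow_32_eq_sqrt_cube _ hprem0]
  have hd0 : (0:ℝ) < Real.sqrt (1 - t) := Real.sqrt_pos.mpr h1t
  -- stationarity: √q * √(1-t) = 2 √(A - q t)
  have hstat : Real.sqrt q * Real.sqrt (1 - t)
      = 2 * Real.sqrt (α - q * t + (1 - t)⁻¹) := by
    rw [← Real.sqrt_mul hq0, hrem]
    rw [show q * (1-t) = 4 * (A * (1-t) / (1+3*t)) by rw [hq]; field_simp]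
    rw [show (4:ℝ) * (A * (1-t) / (1+3*t)) = 2^2 * (A * (1-t) / (1+3*t)) by ring,
      Real.sqrt_mul (by positivity), Real.sqrt_sq (by norm_num)]
  have t1 := tangent_sqrt p q hp hq0
  have t2 := tangent_sqrt (α - p * t + (1 - t)⁻¹) (α - q * t + (1 - t)⁻¹) hprem0 hrem0
  set d := Real.sqrt (1 - t) with hd
  set sp := Real.sqrt p with hsp
  set sq := Real.sqrt q with hsq
  set rp := Real.sqrt (α - p * t + (1 - t)⁻¹) with hrp
  set rq := Real.sqrt (α - q * t + (1 - t)⁻¹) with hrq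
  clear_value d sp sq rp rq
  have t2' : rq^3 + (3/2)*rq*((q - p)*t) ≤ rp^3 := by
    have hdiff : (α - p * t + (1 - t)⁻¹) - (α - q * t + (1 - t)⁻¹) = (q - p)*t := by ring
    rw [hdiff] at t2; linarith
  have hsqd : sq = 2 * rq / d := by rw [eq_div_iff hd0.ne']; exact hstat
  have key : (4/3) * (t * sp ^ 3 + 2 * rp ^ 3 / d) - (4/3) * (t * sq ^ 3 + 2 * rq ^ 3 / d)
      = (4/3)*t*(sp^3 - (sq^3 + (3/2)*sq*(p - q)))
        + ((8/3)/d)*(rp^3 - (rq^3 + (3/2)*rq*((q - p)*t)))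
        + 2*t*(p - q)*(sq - 2*rq/d) := by
    field_simp
    ring
  have h3 : sq - 2*rq/d = 0 := by rw [hsqd]; ring
  rw [h3] at key
  have h1 : 0 ≤ (4/3)*t*(sp^3 - (sq^3 + (3/2)*sq*(p - q))) :=
    mul_nonneg (by positivity) (by linarith)
  have h2 : 0 ≤ ((8/3)/d)*(rp^3 - (rq^3 + (3/2)*rq*((q - p)*t))) :=
    mul_nonneg (by positivity) (by linarith)
  linarith [key, h1, h2]

theorem two_point_Y_optimization (α : ℝ) (hα : 0 < α) :
    let I : ℝ → ℝ → ℝ := fun p t =>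
      (4/3) * (t * p ^ ((3:ℝ)/2) +
        2 * (α - p * t + (1 - t)⁻¹) ^ ((3:ℝ)/2) / Real.sqrt (1 - t))
    let pstar : ℝ → ℝ := fun t => 4 * (α + (1 - t)⁻¹) / (1 + 3 * t)
    let tstar : ℝ := (Real.sqrt (1 + 1/α) - Real.sqrt (1/α))^2
    -- `t*` is admissible
    (tstar ∈ Set.Ioo (0:ℝ) 1) ∧
    -- minimization over `p` at fixed `t`
    (∀ t ∈ Set.Ioo (0:ℝ) 1, ∀ p : ℝ, 0 ≤ p → p * t ≤ α + (1 - t)⁻¹ →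
      I (pstar t) t ≤ I p t) ∧
    -- minimization over `t`
    (∀ t ∈ Set.Ioo (0:ℝ) 1, I (pstar tstar) tstar ≤ I (pstar t) t) ∧
    -- the minimal value
    I (pstar tstar) tstar = 4/3 + 2*α + (4/3) * (1 + α) ^ ((3:ℝ)/2) := by
  intro I pstar tstar
  set b := Real.sqrt (1 + α) with hbdef
  have hb2 : b ^ 2 = 1 + α := Real.sq_sqrt (by linarith)
  have hb1 : 1 < b := by
    have := Real.sqrt_lt_sqrt (by norm_num : (0:ℝ) ≤ 1) (by linarith : (1:ℝ) < 1 + α)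
    simpa using this
  have hb0 : 0 < b := by linarith
  have hbne : b + 1 ≠ 0 := by intro h; linarith [h]
  have hb1' : (0:ℝ) < 2*b - 1 := by linarith
  -- tstar = (b-1)/(b+1)
  have htst : tstar = (b - 1) / (b + 1) := by
    have hsa : (0:ℝ) < Real.sqrt α := Real.sqrt_pos.mpr hα
    have h1 : Real.sqrt (1 + 1/α) = b / Real.sqrt α := by
      rw [show (1:ℝ) + 1/α = (1 + α)/α by field_simp; ring, Real.sqrt_div (by linarith)]
    have h2 : Real.sqrt (1/α) = 1 / Real.sqrt α := by
      rw [one_div, Real.sqrt_inv, one_div]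
    have hsa2 : Real.sqrt α ^ 2 = α := Real.sq_sqrt hα.le
    have hα' : α = (b - 1) * (b + 1) := by linear_combination -hb2
    show (Real.sqrt (1 + 1/α) - Real.sqrt (1/α))^2 = (b - 1) / (b + 1)
    rw [h1, h2, div_sub_div_same, div_pow, hsa2, hα',
      div_eq_div_iff (mul_pos (by linarith : (0:ℝ) < b - 1) (by linarith : (0:ℝ) < b + 1)).ne'
        (by linarith : (0:ℝ) < b + 1).ne']
    ring
  have htst0 : 0 < tstar := by
    rw [htst]; exact div_pos (by linarith) (by linarith)
  have htst1 : tstar < 1 := by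
    rw [htst, div_lt_one (by linarith)]; linarith
  have h1mt : 1 - tstar = 2 / (b + 1) := by
    rw [htst]; field_simp; norm_num
  have h1mtinv : (1 - tstar)⁻¹ = (b + 1) / 2 := by rw [h1mt, inv_div]
  have h13t : 1 + 3 * tstar = 2 * (2*b - 1) / (b + 1) := by
    rw [htst]; field_simp; ring
  have hAst : α + (1 - tstar)⁻¹ = (b + 1) * (2*b - 1) / 2 := by
    rw [h1mtinv]; linear_combination -hb2
  -- value at (pstar tstar, tstar)
  have hval : I (pstar tstar) tstar = (2/3) * (b+1)^2 * (2*b-1) := by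
    show (4/3) * (tstar * (4 * (α + (1 - tstar)⁻¹) / (1 + 3 * tstar)) ^ ((3:ℝ)/2) +
      2 * (α - (4 * (α + (1 - tstar)⁻¹) / (1 + 3 * tstar)) * tstar + (1 - tstar)⁻¹) ^ ((3:ℝ)/2)
        / Real.sqrt (1 - tstar)) = (2/3) * (b+1)^2 * (2*b-1)
    rw [value_at_pstar α tstar hα htst0 htst1]
    set Ast := α + (1 - tstar)⁻¹ with hAstdef
    have hAst0 : (0:ℝ) < Ast := by rw [hAst]; nlinarith
    have hC0 : (0:ℝ) < 1 + 3 * tstar := by linarith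
    have hratio : Real.sqrt Ast / Real.sqrt (1 + 3*tstar) = (b + 1) / 2 := by
      rw [← Real.sqrt_div hAst0.le]
      rw [show Ast / (1 + 3*tstar) = ((b+1)/2)^2 by
        rw [hAst, h13t]; field_simp [hbne, hb1'.ne']; exact div_self (by linarith)]
      exact Real.sqrt_sq (by linarith)
    have hsq : Real.sqrt Ast ^ 2 = Ast := Real.sq_sqrt hAst0.le
    have expand : (8/3) * Real.sqrt Ast ^ 3 / Real.sqrt (1 + 3*tstar)
        = (8/3) * (Real.sqrt Ast ^ 2) * (Real.sqrt Ast / Real.sqrt (1 + 3*tstar)) := by ring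
    rw [expand, hsq, hratio, hAst]
    ring
  refine ⟨⟨htst0, htst1⟩, ?_, ?_, ?_⟩
  · rintro t ⟨ht0, ht1⟩ p hp hpc
    exact min_over_p α t hα ht0 ht1 p hp hpc
  · rintro t ⟨ht0, ht1⟩
    rw [hval]
    show (2/3) * (b+1)^2 * (2*b-1) ≤ (4/3) * (t * (4 * (α + (1 - t)⁻¹) / (1 + 3 * t)) ^ ((3:ℝ)/2) +
      2 * (α - (4 * (α + (1 - t)⁻¹) / (1 + 3 * t)) * t + (1 - t)⁻¹) ^ ((3:ℝ)/2)
        / Real.sqrt (1 - t))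
    rw [value_at_pstar α t hα ht0 ht1]
    have h1t : (0:ℝ) < 1 - t := by linarith
    have h3t : (0:ℝ) < 1 + 3*t := by linarith
    have hA : (0:ℝ) < α + (1 - t)⁻¹ := by positivity
    set A := α + (1 - t)⁻¹ with hAdef
    have ha0 : (0:ℝ) ≤ Real.sqrt A := Real.sqrt_nonneg A
    have ha2 : Real.sqrt A ^ 2 = A := Real.sq_sqrt hA.le
    have hc0 : (0:ℝ) < Real.sqrt (1 + 3*t) := Real.sqrt_pos.mpr h3t
    have hc2 : Real.sqrt (1 + 3*t) ^ 2 = 1 + 3*t := Real.sq_sqrt h3t.le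
    have hX0 : (0:ℝ) ≤ (2/3) * (b+1)^2 * (2*b-1) :=
      mul_nonneg (by positivity) (by linarith)
    have hY0 : (0:ℝ) ≤ (8/3) * Real.sqrt A ^ 3 / Real.sqrt (1 + 3*t) := by positivity
    rw [← Real.sqrt_sq hX0, ← Real.sqrt_sq hY0]
    apply Real.sqrt_le_sqrt
    have hαb : α = b^2 - 1 := by linarith
    have hAu : A = ((b^2 - 1) * (1 - t) + 1) / (1 - t) := by
      rw [hAdef, hαb]; field_simp
    have hsq6 : Real.sqrt A ^ 6 = A ^ 3 := by
      rw [show Real.sqrt A ^ 6 = (Real.sqrt A ^ 2) ^ 3 by ring, ha2]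
    have hexp : ((8/3) * Real.sqrt A ^ 3 / Real.sqrt (1 + 3*t)) ^ 2
        = (64/9) * A^3 / (1 + 3*t) := by
      rw [div_pow, mul_pow, show (Real.sqrt A ^ 3) ^ 2 = Real.sqrt A ^ 6 by ring, hsq6, hc2]
      norm_num
    rw [hexp, hAu, div_pow, le_div_iff₀ h3t,
      show (64:ℝ)/9 * (((b^2-1)*(1-t)+1)^3 / (1-t)^3)
        = (64/9 * ((b^2-1)*(1-t)+1)^3) / (1-t)^3 by ring,
      le_div_iff₀ (by positivity : (0:ℝ) < (1-t)^3)]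
    nlinarith [keypoly b (1 - t) hb1.le h1t.le]
  · rw [hval]
    have hval2 : (1 + α) ^ ((3:ℝ)/2) = b ^ 3 := by
      rw [rpow_32_eq_sqrt_cube _ (by linarith : (0:ℝ) ≤ 1 + α)]
    rw [hval2]
    linear_combination 2 * hb2
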